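/- Let F/E be a finite degree field extension, k ≤ n, and G ∈ F^{k×n} a generator matrix of an F-linear rank metric code C (with rank metric defined via the extension F/E). If C is a maximum rank distance code (minimum rank distance n-k+1), then for every n×k matrix M over E of rank k, the k×k matrix GM is invertible. -/

import Mathlib

/-- If the code generated by G ∈ F^{k×n} is MRD (every nonzero codeword has
rank ≥ n-k+1 over E), then for every n×k matrix M over E of rank k, GM is invertible. -/
theorem stmt_12 (E F : Type*) [Field E] [Field F] [Algebra E F]
    (m n k : ℕ) (hm : Module.finrank E F = m) (hkn : k ≤ n) (hn : n ≤ m)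
    (G : Matrix (Fin k) (Fin n) F) (hG : G.rank = k)
    (hMRD : ∀ x : Fin k → F, x ≠ 0 →
      n - k + 1 ≤ Module.finrank E (Submodule.span E (Set.range (Matrix.vecMul x G))))
    (M : Matrix (Fin n) (Fin k) E) (hM : M.rank = k) :
    (G * M.map (algebraMap E F)).det ≠ 0 := by
  intro hdet
  obtain ⟨x, hx0, hxGM⟩ := Matrix.exists_vecMul_eq_zero_iff.mpr hdet
  set y : Fin n → F := Matrix.vecMul x G with hy
  -- y ≠ 0 since rows of G are linearly independent
  have hrows : LinearIndependent F (fun i ↦ G i) := by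
    rw [linearIndependent_iff_card_eq_finrank_span, Set.finrank, Fintype.card_fin]
    exact hG.symm.trans (Matrix.rank_eq_finrank_span_row G)
  have hyne : y ≠ 0 := by
    intro h
    apply hx0
    have := Matrix.vecMul_injective_iff.mpr hrows
    apply this
    show Matrix.vecMul x G = Matrix.vecMul 0 G
    rw [← hy, h]
    ext j
    simp [Matrix.vecMul, dotProduct]
  -- y * M' = 0
  have hyM : Matrix.vecMul y (M.map (algebraMap E F)) = 0 := by
    rw [hy, Matrix.vecMul_vecMul, hxGM]
  -- the linear combination map
  set L : (Fin n → E) →ₗ[E] F := Fintype.linearCombination E y with hL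
  have hrange : LinearMap.range L = Submodule.span E (Set.range y) :=
    Fintype.range_linearCombination E y
  -- columns of M are in the kernel of L
  have hker : Submodule.span E (Set.range M.transpose) ≤ LinearMap.ker L := by
    rw [Submodule.span_le]
    rintro _ ⟨c, rfl⟩
    simp only [SetLike.mem_coe, LinearMap.mem_ker, hL, Fintype.linearCombination_apply]
    have := congrFun hyM c
    simp only [Matrix.vecMul, dotProduct, Pi.zero_apply, Matrix.map_apply] at this
    rw [← this]
    congr 1
    ext j
    rw [Algebra.smul_def, mul_comm]
    rfl
  have hkerk : k ≤ Module.finrank E (LinearMap.ker L) := by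
    have h1 : Module.finrank E (Submodule.span E (Set.range M.transpose)) = k := by
      have := M.rank_eq_finrank_span_cols
      rw [hM] at this
      exact this.symm
    rw [← h1]
    exact Submodule.finrank_mono hker
  have hrn : Module.finrank E (LinearMap.range L) + Module.finrank E (LinearMap.ker L) = n := by
    have := LinearMap.finrank_range_add_finrank_ker L
    simpa using this
  have hle : Module.finrank E (Submodule.span E (Set.range y)) ≤ n - k := by
    rw [← hrange]; omega
  have := hMRD x hx0
  rw [← hy] at this
  omega
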